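/- Let A ∈ ℝ^{m×n} have nonzero columns a_1,…,a_n, let R ∈ ℝ^{m×m} be symmetric positive definite, Q = R⁻¹, and ε > 0. Suppose F_A ⊆ E(R). Let x ∈ ℝ^n with x ≥ 0 and Σ_{i=1}^n x_i = 1, and suppose y = Σ_{i=1}^n x_i a_i/‖a_i‖_Q satisfies ‖y‖_Q ≤ ε. Define R' = (1/(1+ε))·(R + Σ_{i=1}^n (x_i/‖a_i‖_Q²)·a_i a_iᵀ). Then F_A ⊆ E(R'). -/

import Mathlib

open Matrix Set MeasureTheory Pointwise ENNReal

noncomputable section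

/-- Euclidean dot product on `Fin d → ℝ`. -/
def dotp {d : ℕ} (u v : Fin d → ℝ) : ℝ := ∑ i, u i * v i

/-- Euclidean norm on `Fin d → ℝ`. -/
def norm2 {d : ℕ} (v : Fin d → ℝ) : ℝ := Real.sqrt (∑ i, v i ^ 2)

/-- Normalization `v / ‖v‖`, with the convention that `0` is mapped to `0`. -/
def nml {d : ℕ} (v : Fin d → ℝ) : Fin d → ℝ := (norm2 v)⁻¹ • v

/-- The `j`-th column of a matrix. -/
def mcol {d : ℕ} {ι : Type} (A : Matrix (Fin d) ι ℝ) (j : ι) : Fin d → ℝ := fun i => A i j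

/-- Goffin's condition measure `ρ_A = max_{y ∈ im(A) \ {0}} min_j â_jᵀ ŷ`. -/
def goffin {d : ℕ} {ι : Type} [Fintype ι] (A : Matrix (Fin d) ι ℝ) : ℝ :=
  sSup { r : ℝ | ∃ y : Fin d → ℝ, (∃ x : ι → ℝ, A.mulVec x = y) ∧ y ≠ 0 ∧
    r = ⨅ j : ι, dotp (nml (mcol A j)) (nml y) }

/-- The cone `Σ_A = {y : Aᵀ y ≥ 0}`. -/
def SigmaCone {d : ℕ} {ι : Type} (A : Matrix (Fin d) ι ℝ) : Set (Fin d → ℝ) :=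
  { y | ∀ j, 0 ≤ dotp (mcol A j) y }

/-- `F_A = Σ_A ∩ B^d`. -/
def FA {d : ℕ} {ι : Type} (A : Matrix (Fin d) ι ℝ) : Set (Fin d → ℝ) :=
  SigmaCone A ∩ { z | norm2 z ≤ 1 }

/-- `‖v‖_M = √(vᵀ M v)`. -/
def qnorm {d : ℕ} (M : Matrix (Fin d) (Fin d) ℝ) (v : Fin d → ℝ) : ℝ :=
  Real.sqrt (dotp v (M.mulVec v))

/-- The ellipsoid `E(M) = {z : ‖z‖_M ≤ 1}`. -/
def ell {d : ℕ} (M : Matrix (Fin d) (Fin d) ℝ) : Set (Fin d → ℝ) :=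
  { z | qnorm M z ≤ 1 }

/-- The width of a set `X` along `a`: `sup {aᵀz : z ∈ X}`. -/
def widthOf {d : ℕ} (X : Set (Fin d → ℝ)) (a : Fin d → ℝ) : ℝ :=
  sSup { r : ℝ | ∃ z ∈ X, r = dotp a z }

/-- `P_A = conv(â_1,…,â_n) ∩ (−conv(â_1,…,â_n))`. -/
def PA {d : ℕ} {ι : Type} (A : Matrix (Fin d) ι ℝ) : Set (Fin d → ℝ) :=
  convexHull ℝ (Set.range fun j => nml (mcol A j)) ∩
    (-(convexHull ℝ (Set.range fun j => nml (mcol A j))))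

/-- `Δ_A`: maximum of `∏_{j ∈ B} ‖a_j‖` over sets `B` of linearly independent columns. -/
def DeltaA {d n : ℕ} (A : Matrix (Fin d) (Fin n) ℝ) : ℝ :=
  sSup { p : ℝ | ∃ B : Finset (Fin n),
    LinearIndependent ℝ (fun j : {x // x ∈ B} => mcol A j.1) ∧ p = ∏ j ∈ B, norm2 (mcol A j) }

/-- `T*_A`: indices `i` such that some `y` with `Aᵀy ≥ 0` has `a_iᵀ y > 0`. -/
def TstarA {d : ℕ} {ι : Type} (A : Matrix (Fin d) ι ℝ) : Set ι :=
  { i | ∃ y : Fin d → ℝ, (∀ j, 0 ≤ dotp (mcol A j) y) ∧ 0 < dotp (mcol A i) y }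

/-- `S*_A`: indices `i` such that some `x ≥ 0` with `Ax = 0` has `x_i > 0`. -/
def SstarA {d : ℕ} {ι : Type} [Fintype ι] (A : Matrix (Fin d) ι ℝ) : Set ι :=
  { i | ∃ x : ι → ℝ, (∀ j, 0 ≤ x j) ∧ A.mulVec x = 0 ∧ 0 < x i }

/-- `ω_A = min_{i ∈ T*_A} width_{F_A}(â_i)`. -/
def omegaA {d : ℕ} {ι : Type} (A : Matrix (Fin d) ι ℝ) : ℝ :=
  sInf ((fun i => widthOf (FA A) (nml (mcol A i))) '' TstarA A)

section Aux

open Matrix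

lemma dotp_eq {d : ℕ} (u v : Fin d → ℝ) : dotp u v = u ⬝ᵥ v := rfl

lemma dotRv_symm {d : ℕ} {R : Matrix (Fin d) (Fin d) ℝ} (hR : R.IsHermitian)
    (u v : Fin d → ℝ) : u ⬝ᵥ R *ᵥ v = v ⬝ᵥ R *ᵥ u := by
  rw [Matrix.dotProduct_mulVec, dotProduct_comm, ← Matrix.mulVec_transpose]
  congr 1
  have := hR
  rw [Matrix.IsHermitian] at this
  rw [show Rᵀ = R by simpa [Matrix.conjTranspose_eq_transpose_of_trivial] using this]

lemma psd_cauchy {d : ℕ} {R : Matrix (Fin d) (Fin d) ℝ} (hR : R.PosSemidef)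
    (u v : Fin d → ℝ) :
    (u ⬝ᵥ R *ᵥ v) ^ 2 ≤ (u ⬝ᵥ R *ᵥ u) * (v ⬝ᵥ R *ᵥ v) := by
  have key : ∀ t : ℝ,
      0 ≤ (v ⬝ᵥ R *ᵥ v) * (t * t) + (2 * (u ⬝ᵥ R *ᵥ v)) * t + (u ⬝ᵥ R *ᵥ u) := by
    intro t
    have h0 := hR.dotProduct_mulVec_nonneg (u + t • v)
    simp only [star_trivial] at h0
    have hexp : (u + t • v) ⬝ᵥ R *ᵥ (u + t • v)
        = (v ⬝ᵥ R *ᵥ v) * (t * t) + (2 * (u ⬝ᵥ R *ᵥ v)) * t + (u ⬝ᵥ R *ᵥ u) := by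
      rw [Matrix.mulVec_add, Matrix.mulVec_smul, add_dotProduct,
        smul_dotProduct, dotProduct_add, dotProduct_smul,
        dotProduct_add, dotProduct_smul,
        dotRv_symm hR.1 v u]
      simp only [smul_eq_mul]
      ring
    linarith [hexp ▸ h0]
  have hd := discrim_le_zero key
  rw [discrim] at hd
  nlinarith [hd]

lemma dotProduct_sum' {d : ℕ} {ι : Type*} (s : Finset ι) (v : Fin d → ℝ) (f : ι → Fin d → ℝ) :
    v ⬝ᵥ (∑ i ∈ s, f i) = ∑ i ∈ s, v ⬝ᵥ f i := by
  simp only [dotProduct, Finset.sum_apply, Finset.mul_sum]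
  exact Finset.sum_comm

lemma sum_dotProduct' {d : ℕ} {ι : Type*} (s : Finset ι) (f : ι → Fin d → ℝ) (v : Fin d → ℝ) :
    (∑ i ∈ s, f i) ⬝ᵥ v = ∑ i ∈ s, f i ⬝ᵥ v := by
  simp only [dotProduct, Finset.sum_apply, Finset.sum_mul]
  exact Finset.sum_comm

lemma sum_mulVec' {d : ℕ} {ι : Type*} (s : Finset ι) (M : ι → Matrix (Fin d) (Fin d) ℝ)
    (v : Fin d → ℝ) : (∑ i ∈ s, M i) *ᵥ v = ∑ i ∈ s, M i *ᵥ v := by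
  ext j
  simp only [Matrix.mulVec, dotProduct, Matrix.sum_apply, Finset.sum_apply, Finset.sum_mul]
  exact Finset.sum_comm

lemma vecMulVec_qform {d : ℕ} (a z : Fin d → ℝ) :
    z ⬝ᵥ (Matrix.vecMulVec a a *ᵥ z) = (a ⬝ᵥ z) ^ 2 := by
  simp only [Matrix.mulVec, dotProduct, Matrix.vecMulVec_apply, Finset.mul_sum]
  rw [sq, Finset.sum_mul_sum]
  exact Finset.sum_congr rfl fun i _ => Finset.sum_congr rfl fun j _ => by ring

end Aux

/-- Lemma 3.2: if `F_A ⊆ E(R)` and `y = Σᵢ xᵢ aᵢ/‖aᵢ‖_Q` (with `x ≥ 0`, `Σ xᵢ = 1`,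
`Q = R⁻¹`) satisfies `‖y‖_Q ≤ ε`, then `F_A ⊆ E(R')` for the rescaled matrix
`R' = (R + Σᵢ (xᵢ/‖aᵢ‖_Q²) aᵢaᵢᵀ)/(1+ε)`. -/
theorem FA_subset_rescaled_ellipsoid
    {m n : ℕ} (A : Matrix (Fin m) (Fin n) ℝ) (hcols : ∀ j, mcol A j ≠ 0)
    (R : Matrix (Fin m) (Fin m) ℝ) (hR : R.PosDef)
    (ε : ℝ) (hε : 0 < ε)
    (hFE : FA A ⊆ ell R)
    (x : Fin n → ℝ) (hx : ∀ i, 0 ≤ x i) (hx1 : ∑ i, x i = 1)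
    (y : Fin m → ℝ)
    (hy : y = ∑ i, (x i / qnorm R⁻¹ (mcol A i)) • mcol A i)
    (hynorm : qnorm R⁻¹ y ≤ ε) :
    FA A ⊆ ell ((1 / (1 + ε)) •
      (R + ∑ i, (x i / qnorm R⁻¹ (mcol A i) ^ 2) • vecMulVec (mcol A i) (mcol A i))) := by
  classical
  set Q := R⁻¹ with hQdef
  have hQ : Q.PosDef := hR.inv
  have hQR : Q * R = 1 := Matrix.nonsing_inv_mul R (isUnit_iff_ne_zero.mpr hR.det_pos.ne')
  have key : ∀ (a w : Fin m → ℝ), (Q *ᵥ a) ⬝ᵥ (R *ᵥ w) = a ⬝ᵥ w := by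
    intro a w
    rw [dotProduct_comm, dotRv_symm hQ.1 (R *ᵥ w) a, Matrix.mulVec_mulVec, hQR,
      Matrix.one_mulVec]
  have csa : ∀ a w : Fin m → ℝ,
      (a ⬝ᵥ w) ^ 2 ≤ (a ⬝ᵥ Q *ᵥ a) * (w ⬝ᵥ R *ᵥ w) := by
    intro a w
    have h := psd_cauchy hR.posSemidef (Q *ᵥ a) w
    rwa [key a w, key a (Q *ᵥ a)] at h
  intro z hz
  obtain ⟨hzC, hzB⟩ := hz
  have hzR : qnorm R z ≤ 1 := hFE ⟨hzC, hzB⟩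
  have hzRnn : 0 ≤ z ⬝ᵥ R *ᵥ z := by simpa using hR.posSemidef.dotProduct_mulVec_nonneg z
  have hz1 : z ⬝ᵥ R *ᵥ z ≤ 1 := by
    have h : Real.sqrt (z ⬝ᵥ R *ᵥ z) ≤ 1 := hzR
    nlinarith [Real.sq_sqrt hzRnn, Real.sqrt_nonneg (z ⬝ᵥ R *ᵥ z)]
  set N : Fin n → ℝ := fun i => qnorm Q (mcol A i) with hN
  have hq : ∀ i, 0 < mcol A i ⬝ᵥ Q *ᵥ mcol A i := by
    intro i
    simpa using hQ.dotProduct_mulVec_pos (hcols i)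
  have hNpos : ∀ i, 0 < N i := fun i => Real.sqrt_pos.mpr (hq i)
  have hNsq : ∀ i, N i ^ 2 = mcol A i ⬝ᵥ Q *ᵥ mcol A i := fun i => Real.sq_sqrt (hq i).le
  set c : Fin n → ℝ := fun i => mcol A i ⬝ᵥ z with hc
  have hcnn : ∀ i, 0 ≤ c i := fun i => hzC i
  have hcle : ∀ i, c i ≤ N i := by
    intro i
    have h := csa (mcol A i) z
    have h2 : c i ^ 2 ≤ N i ^ 2 := by
      rw [hNsq i]
      calc c i ^ 2 ≤ (mcol A i ⬝ᵥ Q *ᵥ mcol A i) * (z ⬝ᵥ R *ᵥ z) := h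
        _ ≤ (mcol A i ⬝ᵥ Q *ᵥ mcol A i) * 1 := mul_le_mul_of_nonneg_left hz1 (hq i).le
        _ = _ := mul_one _
    nlinarith [hNpos i, hcnn i]
  have hyz : y ⬝ᵥ z = ∑ i, (x i / N i) * c i := by
    rw [hy, sum_dotProduct']
    refine Finset.sum_congr rfl fun i _ => ?_
    rw [smul_dotProduct, smul_eq_mul]
  have hyQnn : 0 ≤ y ⬝ᵥ Q *ᵥ y := by simpa using hQ.posSemidef.dotProduct_mulVec_nonneg y
  have hyQ : y ⬝ᵥ Q *ᵥ y ≤ ε ^ 2 := by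
    have h : Real.sqrt (y ⬝ᵥ Q *ᵥ y) ≤ ε := hynorm
    nlinarith [Real.sq_sqrt hyQnn, Real.sqrt_nonneg (y ⬝ᵥ Q *ᵥ y)]
  have hyzle : y ⬝ᵥ z ≤ ε := by
    have h2 : (y ⬝ᵥ z) ^ 2 ≤ (y ⬝ᵥ Q *ᵥ y) * (z ⬝ᵥ R *ᵥ z) := csa y z
    nlinarith [mul_le_mul hyQ hz1 hzRnn (by positivity : (0:ℝ) ≤ ε ^ 2)]
  have hsum : ∑ i, (x i / N i ^ 2) * c i ^ 2 ≤ ε := by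
    calc ∑ i, (x i / N i ^ 2) * c i ^ 2 ≤ ∑ i, (x i / N i) * c i := by
          refine Finset.sum_le_sum fun i _ => ?_
          have hNi := hNpos i
          have hci := hcnn i
          have hle := hcle i
          have hxi := hx i
          rw [div_mul_eq_mul_div, div_mul_eq_mul_div, div_le_div_iff₀ (by positivity) hNi]
          nlinarith [mul_nonneg (mul_nonneg hxi hci) hNi.le,
            mul_le_mul_of_nonneg_left hle (mul_nonneg (mul_nonneg hxi hci) hNi.le)]
      _ = y ⬝ᵥ z := hyz.symm
      _ ≤ ε := hyzle
  have hval : z ⬝ᵥ (((1 / (1 + ε)) •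
      (R + ∑ i, (x i / qnorm R⁻¹ (mcol A i) ^ 2) • vecMulVec (mcol A i) (mcol A i))) *ᵥ z)
      = (1 / (1 + ε)) * (z ⬝ᵥ R *ᵥ z + ∑ i, (x i / N i ^ 2) * c i ^ 2) := by
    rw [Matrix.smul_mulVec, dotProduct_smul, smul_eq_mul]
    congr 1
    rw [Matrix.add_mulVec, dotProduct_add]
    congr 1
    rw [sum_mulVec', dotProduct_sum']
    refine Finset.sum_congr rfl fun i _ => ?_
    rw [Matrix.smul_mulVec, dotProduct_smul, smul_eq_mul, vecMulVec_qform]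
  have hε1 : (0:ℝ) < 1 + ε := by linarith
  have hgoal : z ⬝ᵥ (((1 / (1 + ε)) •
      (R + ∑ i, (x i / qnorm R⁻¹ (mcol A i) ^ 2) • vecMulVec (mcol A i) (mcol A i))) *ᵥ z) ≤ 1 := by
    rw [hval]
    rw [div_mul_eq_mul_div, one_mul, div_le_one hε1]
    linarith
  show Real.sqrt _ ≤ 1
  calc Real.sqrt _ ≤ Real.sqrt 1 := Real.sqrt_le_sqrt hgoal
    _ = 1 := Real.sqrt_one
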